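/- (Lemma 1) Let K ≥ 1, let A₁,…,A_K > 0 and c₁,…,c_K > 0, let r > 0 and p̄ > 0. Define the objective f(p) = Σ_{k=1}^K A_k·exp(−c_k·max_{1≤t≤k} (1/p_t)) for p ∈ ℝ^K with all p_k > 0. Then the supremum of f over the set F₀ = {p ∈ ℝ^K : p_k > 0 for all k, Σ_{k=1}^K (r+1)^{k−1} p_k ≤ p̄} equals the supremum of f over the smaller set F₀ ∩ {p : p₁ ≥ p₂ ≥ … ≥ p_K}; that is, adding the ordering constraint p₁ ≥ p₂ ≥ … ≥ p_K does not change the optimal objective value. -/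

import Mathlib

/-- Lemma 1: for the objective
f(p) = ∑ₖ Aₖ·exp(−cₖ·max_{t≤k} 1/pₜ), the supremum of f over
F₀ = {p : pₖ > 0 ∀k, ∑ (r+1)^{k−1} pₖ ≤ p̄} equals the supremum of f over
F₀ intersected with the ordering constraint p₁ ≥ p₂ ≥ … ≥ p_K. -/
theorem stmt10 (K : ℕ) (hK : 1 ≤ K) (A c : Fin K → ℝ)
    (hA : ∀ k, 0 < A k) (hc : ∀ k, 0 < c k)
    (r pbar : ℝ) (hr : 0 < r) (hpbar : 0 < pbar)
    (f : (Fin K → ℝ) → ℝ)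
    (hf : ∀ p, f p = ∑ k, A k * Real.exp (-(c k) *
      (Finset.Iic k).sup' ⟨k, Finset.mem_Iic.mpr le_rfl⟩ (fun t => 1 / p t)))
    (F0 : Set (Fin K → ℝ))
    (hF0 : F0 = {p | (∀ k, 0 < p k) ∧ ∑ k : Fin K, ((r + 1) ^ (k : ℕ)) * p k ≤ pbar}) :
    sSup (f '' F0) = sSup (f '' (F0 ∩ {p | ∀ i j : Fin K, i ≤ j → p j ≤ p i})) := by
  subst hF0
  congr 1
  apply Set.Subset.antisymm
  · rintro _ ⟨p, ⟨hp, hsum⟩, rfl⟩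
    set q : Fin K → ℝ :=
      fun k => (Finset.Iic k).inf' ⟨k, Finset.mem_Iic.mpr le_rfl⟩ p with hq
    have hqpos : ∀ k, 0 < q k := by
      intro k
      rw [hq]
      exact (Finset.lt_inf'_iff _).mpr (fun t _ => hp t)
    have hqle : ∀ k, q k ≤ p k :=
      fun k => Finset.inf'_le _ (Finset.mem_Iic.mpr le_rfl)
    have hmono : ∀ i j : Fin K, i ≤ j → q j ≤ q i := by
      intro i j hij
      apply Finset.le_inf'
      intro t ht
      exact Finset.inf'_le _ (Finset.mem_Iic.mpr ((Finset.mem_Iic.mp ht).trans hij))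
    have hsumq : ∑ k : Fin K, ((r + 1) ^ (k : ℕ)) * q k ≤ pbar := by
      refine le_trans (Finset.sum_le_sum fun k _ => ?_) hsum
      exact mul_le_mul_of_nonneg_left (hqle k) (pow_nonneg (by linarith) _)
    have hsup : ∀ k : Fin K,
        (Finset.Iic k).sup' ⟨k, Finset.mem_Iic.mpr le_rfl⟩ (fun t => 1 / q t)
          = (Finset.Iic k).sup' ⟨k, Finset.mem_Iic.mpr le_rfl⟩ (fun t => 1 / p t) := by
      intro k
      apply le_antisymm
      · apply Finset.sup'_le
        intro t ht
        obtain ⟨s, hs, hqs⟩ :=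
          Finset.exists_mem_eq_inf' (⟨t, Finset.mem_Iic.mpr le_rfl⟩ :
            (Finset.Iic t).Nonempty) p
        have : q t = p s := hqs
        rw [this]
        exact Finset.le_sup' (fun t => 1 / p t)
          (Finset.mem_Iic.mpr ((Finset.mem_Iic.mp hs).trans (Finset.mem_Iic.mp ht)))
      · apply Finset.sup'_le
        intro t ht
        exact le_trans (one_div_le_one_div_of_le (hqpos t) (hqle t))
          (Finset.le_sup' (fun t => 1 / q t) ht)
    have hfq : f q = f p := by
      rw [hf, hf]
      exact Finset.sum_congr rfl fun k _ => by rw [hsup k]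
    exact ⟨q, ⟨⟨hqpos, hsumq⟩, hmono⟩, hfq⟩
  · exact Set.image_mono Set.inter_subset_left
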